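/- Uniqueness for the regularized periodic problem (Theorem 2.4): let μ > 0, ν ≥ 0, ε > 0 and i ∈ {0,1}. Let A : ℝ×ℝ² → ℝ and C : ℝ×ℝ² → ℝ² be C¹ on an open set containing ℝ×closure(Ω), 1-periodic in their first argument θ, with A ≥ 0, and let g : ℝ² → ℝ be continuous. If S₁ and S₂ are both C¹ in θ, C² in x on an open set containing ℝ×closure(Ω), 1-periodic in θ, and satisfy μS + ∂S/∂θ − (1/εⁱ)∇·((A(θ,·)+ν)∇S(θ,·)) = (1/εⁱ)∇·C(θ,·) pointwise in Ω and ∂S/∂n + S = g pointwise on ∂Ω for every θ, then S₁ = S₂ on ℝ×closure(Ω). -/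

import Mathlib

open MeasureTheory Set Real
open scoped RealInnerProductSpace

noncomputable section

abbrev E2 : Type := EuclideanSpace ℝ (Fin 2)

/-- Divergence of a vector field on the plane. -/
def vdiv (F : E2 → E2) (x : E2) : ℝ := ∑ i, fderiv ℝ F x (EuclideanSpace.single i 1) i


lemma euclid_sum_single (v : E2) : ∑ i, (v i) • EuclideanSpace.single i (1:ℝ) = v := by
  ext j
  simp [Finset.sum_apply, EuclideanSpace.single_apply]
  fin_cases j <;> simp

lemma sum_apply_single (L : E2 →L[ℝ] ℝ) (v : E2) :
    ∑ i, L (EuclideanSpace.single i 1) * v i = L v := by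
  conv_rhs => rw [← euclid_sum_single v]
  rw [map_sum]
  refine Finset.sum_congr rfl fun i _ => ?_
  rw [L.map_smul, smul_eq_mul, mul_comm]

lemma inner_gradient_apply (f : E2 → ℝ) (x y : E2) : ⟪gradient f x, y⟫ = fderiv ℝ f x y := by
  rw [gradient]
  exact InnerProductSpace.toDual_symm_apply

lemma gradient_sub' {f g : E2 → ℝ} {x : E2} (hf : DifferentiableAt ℝ f x)
    (hg : DifferentiableAt ℝ g x) :
    gradient (fun y => f y - g y) x = gradient f x - gradient g x := by
  rw [gradient, gradient, gradient, fderiv_fun_sub hf hg, map_sub]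

lemma vdiv_smul {f : E2 → ℝ} {G : E2 → E2} {x : E2}
    (hf : DifferentiableAt ℝ f x) (hG : DifferentiableAt ℝ G x) :
    vdiv (fun y => f y • G y) x = ⟪gradient f x, G x⟫ + f x * vdiv G x := by
  unfold vdiv
  rw [fderiv_fun_smul hf hG, inner_gradient_apply, Finset.mul_sum, ← sum_apply_single (fderiv ℝ f x) (G x)]
  rw [← Finset.sum_add_distrib]
  refine Finset.sum_congr rfl fun i _ => ?_
  simp [ContinuousLinearMap.add_apply, ContinuousLinearMap.smulRight_apply]
  ring

lemma vdiv_sub {F G : E2 → E2} {x : E2} (hF : DifferentiableAt ℝ F x)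
    (hG : DifferentiableAt ℝ G x) :
    vdiv (fun y => F y - G y) x = vdiv F x - vdiv G x := by
  unfold vdiv
  rw [fderiv_fun_sub hF hG, ← Finset.sum_sub_distrib]
  simp

lemma continuousOn_vdiv {F : E2 → E2} {U : Set E2} (hU : IsOpen U) (hF : ContDiffOn ℝ 1 F U) :
    ContinuousOn (vdiv F) U := by
  have h := hF.continuousOn_fderiv_of_isOpen hU le_rfl
  apply continuousOn_finset_sum
  intro i _
  have : Continuous (fun L : E2 →L[ℝ] E2 => L (EuclideanSpace.single i 1) i) := by
    exact (continuous_apply i).comp ((PiLp.continuous_ofLp (p := 2) (β := fun _ : Fin 2 => ℝ)).comp (ContinuousLinearMap.apply ℝ E2 (EuclideanSpace.single i (1:ℝ))).continuous)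
  exact this.comp_continuousOn h

lemma gradient_apply (f : E2 → ℝ) (x : E2) (j : Fin 2) :
    gradient f x j = fderiv ℝ f x (EuclideanSpace.single j 1) := by
  have h := inner_gradient_apply f x (EuclideanSpace.single j 1)
  rwa [real_inner_comm, EuclideanSpace.inner_single_left, RCLike.conj_to_real, one_mul] at h

lemma gradient_eq_sum (f : E2 → ℝ) :
    (fun x => gradient f x)
      = fun x => ∑ j, fderiv ℝ f x (EuclideanSpace.single j 1) • EuclideanSpace.single j (1:ℝ) := by
  funext x
  ext j
  rw [gradient_apply]
  simp [Finset.sum_apply, EuclideanSpace.single_apply]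
  fin_cases j <;> simp

lemma contDiffOn_gradient {f : E2 → ℝ} {U : Set E2} (hU : IsOpen U) (hf : ContDiffOn ℝ 2 f U) :
    ContDiffOn ℝ 1 (fun x => gradient f x) U := by
  have h := ContDiffOn.fderiv_of_isOpen (m := 1) hf hU (by norm_num)
  rw [gradient_eq_sum]
  apply ContDiffOn.sum
  intro j _
  refine ContDiffOn.smul (?_ : ContDiffOn ℝ 1 (fun x => fderiv ℝ f x (EuclideanSpace.single j 1)) U) contDiffOn_const
  exact (ContinuousLinearMap.apply ℝ ℝ (EuclideanSpace.single j 1)).contDiff.comp_contDiffOn h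

lemma integrableOn_of_contOn {f : E2 → ℝ} {V s : Set E2} (hs : IsCompact (closure s))
    (hV : ContinuousOn f V) (hsub : closure s ⊆ V) : IntegrableOn f s volume :=
  ((hV.mono hsub).integrableOn_compact hs).mono_set subset_closure

lemma vdiv_congr {F G : E2 → E2} {x : E2} (h : F =ᶠ[nhds x] G) : vdiv F x = vdiv G x := by
  unfold vdiv; rw [Filter.EventuallyEq.fderiv_eq h]

lemma eqzero_of_ae_zero {α : Type*} [TopologicalSpace α] [MeasurableSpace α]
    [OpensMeasurableSpace α] {m : Measure α} [m.IsOpenPosMeasure] {f : α → ℝ} {s t : Set α}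
    (hs : IsOpen s) (hf : ContinuousOn f s) (hst : s ⊆ t)
    (h : ∀ᵐ x ∂(m.restrict t), f x = 0) : ∀ x ∈ s, f x = 0 := by
  intro x hx
  by_contra hne
  have hca : ContinuousAt f x := hf.continuousAt (hs.mem_nhds hx)
  have hN : f ⁻¹' ({0}ᶜ) ∈ nhds x := hca.preimage_mem_nhds (compl_singleton_mem_nhds hne)
  obtain ⟨t', ht'sub, ht'open, hxt'⟩ := mem_nhds_iff.mp hN
  have hpos : 0 < m.restrict t (t' ∩ s) := by
    rw [Measure.restrict_apply (ht'open.inter hs).measurableSet]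
    rw [inter_eq_self_of_subset_left ((inter_subset_right).trans hst)]
    exact (ht'open.inter hs).measure_pos m ⟨x, hxt', hx⟩
  have hz : m.restrict t {y | ¬ f y = 0} = 0 := by
    rw [ae_iff] at h; exact h
  have hzero : m.restrict t (t' ∩ s) = 0 :=
    measure_mono_null (fun y hy => ht'sub hy.1) hz
  rw [hzero] at hpos; exact lt_irrefl _ hpos

/-- A nonempty bounded open set in the plane with `C¹` boundary described by a defining
function `Φ`. -/
structure C1Domain where
  Ω : Set E2
  Φ : E2 → ℝ
  nonempty : Ω.Nonempty
  bounded : Bornology.IsBounded Ω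
  isOpen : IsOpen Ω
  smoothΦ : ContDiff ℝ 1 Φ
  eq_dom : Ω = {x | Φ x < 0}
  eq_bd : frontier Ω = {x | Φ x = 0}
  grad_ne : ∀ x ∈ frontier Ω, gradient Φ x ≠ 0

/-- Outward unit normal. -/
def nml (D : C1Domain) (x : E2) : E2 := ‖gradient D.Φ x‖⁻¹ • gradient D.Φ x

/-- The divergence theorem holds on the domain. -/
def DivergenceThm (D : C1Domain) : Prop :=
  ∀ F : E2 → E2, (∃ U : Set E2, IsOpen U ∧ closure D.Ω ⊆ U ∧ ContDiffOn ℝ 1 F U) →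
    (∫ x in D.Ω, vdiv F x) = ∫ x in frontier D.Ω, ⟪F x, nml D x⟫ ∂μH[1]

/-- `S(θ,x)` is `C¹` in `θ` and `C²` in `x` on an open set containing `ℝ × closure Ω`,
and is `1`-periodic in `θ`. -/
def PeriodicReg (D : C1Domain) (S : ℝ → E2 → ℝ) : Prop :=
  (∃ U : Set (ℝ × E2), IsOpen U ∧ ((univ : Set ℝ) ×ˢ closure D.Ω) ⊆ U ∧
    ContDiffOn ℝ 1 (fun p : ℝ × E2 => S p.1 p.2) U ∧
    ∀ θ : ℝ, ContDiffOn ℝ 2 (fun x => S θ x) {x | (θ, x) ∈ U}) ∧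
  ∀ θ x, S (θ + 1) x = S θ x

/-- uniqueness for the regularized periodic Robin problem
`μS + ∂S/∂θ − (1/εⁱ)∇·((A+ν)∇S) = (1/εⁱ)∇·C` (Theorem 2.4). -/
theorem stmt6
    (D : C1Domain) (hdiv : DivergenceThm D)
    (μ ν ε : ℝ) (hμ : 0 < μ) (hν : 0 ≤ ν) (hε : 0 < ε)
    (i : ℕ) (hi : i = 0 ∨ i = 1)
    (A : ℝ → E2 → ℝ) (C : ℝ → E2 → E2)
    (UA : Set (ℝ × E2)) (hUAopen : IsOpen UA)
    (hUAsub : (univ : Set ℝ) ×ˢ closure D.Ω ⊆ UA)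
    (hA : ContDiffOn ℝ 1 (fun p : ℝ × E2 => A p.1 p.2) UA)
    (hC : ContDiffOn ℝ 1 (fun p : ℝ × E2 => C p.1 p.2) UA)
    (hAper : ∀ θ x, A (θ + 1) x = A θ x)
    (hCper : ∀ θ x, C (θ + 1) x = C θ x)
    (hApos : ∀ θ x, 0 ≤ A θ x)
    (g : E2 → ℝ) (hg : Continuous g)
    (S₁ S₂ : ℝ → E2 → ℝ)
    (hreg1 : PeriodicReg D S₁) (hreg2 : PeriodicReg D S₂)
    (hpde1 : ∀ θ : ℝ, ∀ x ∈ D.Ω,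
      μ * S₁ θ x + deriv (fun s => S₁ s x) θ
          - (1 / ε ^ i) * vdiv (fun y => (A θ y + ν) • gradient (S₁ θ) y) x
        = (1 / ε ^ i) * vdiv (C θ) x)
    (hpde2 : ∀ θ : ℝ, ∀ x ∈ D.Ω,
      μ * S₂ θ x + deriv (fun s => S₂ s x) θ
          - (1 / ε ^ i) * vdiv (fun y => (A θ y + ν) • gradient (S₂ θ) y) x
        = (1 / ε ^ i) * vdiv (C θ) x)
    (hbc1 : ∀ θ : ℝ, ∀ x ∈ frontier D.Ω,
      ⟪gradient (S₁ θ) x, nml D x⟫ + S₁ θ x = g x)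
    (hbc2 : ∀ θ : ℝ, ∀ x ∈ frontier D.Ω,
      ⟪gradient (S₂ θ) x, nml D x⟫ + S₂ θ x = g x) :
    ∀ θ : ℝ, ∀ x ∈ closure D.Ω, S₁ θ x = S₂ θ x := by
  intro θ₀ x₀ hx₀
  have hKc : IsCompact (closure D.Ω) := D.bounded.isCompact_closure
  obtain ⟨⟨U₁, hU₁o, hU₁s, hS₁j, hS₁x⟩, hper1⟩ := hreg1
  obtain ⟨⟨U₂, hU₂o, hU₂s, hS₂j, hS₂x⟩, hper2⟩ := hreg2
  set U : Set (ℝ × E2) := (U₁ ∩ U₂) ∩ UA with hUdef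
  have hUo : IsOpen U := (hU₁o.inter hU₂o).inter hUAopen
  have hU1 : U ⊆ U₁ := fun p hp => hp.1.1
  have hU2 : U ⊆ U₂ := fun p hp => hp.1.2
  have hUA' : U ⊆ UA := fun p hp => hp.2
  have hUs : ((univ : Set ℝ) ×ˢ closure D.Ω) ⊆ U :=
    subset_inter (subset_inter hU₁s hU₂s) hUAsub
  have hmemU : ∀ (θ : ℝ) {x : E2}, x ∈ closure D.Ω → (θ, x) ∈ U :=
    fun θ x hx => hUs ⟨mem_univ _, hx⟩
  set W : ℝ → E2 → ℝ := fun θ x => S₁ θ x - S₂ θ x with hWdef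
  have hWj : ContDiffOn ℝ 1 (fun p : ℝ × E2 => W p.1 p.2) U :=
    (hS₁j.mono hU1).sub (hS₂j.mono hU2)
  have hWc : ContinuousOn (fun p : ℝ × E2 => W p.1 p.2) U := hWj.continuousOn
  set DW : ℝ × E2 → ℝ := fun p => fderiv ℝ (fun q : ℝ × E2 => W q.1 q.2) p (1, 0) with hDWdef
  have hDWc : ContinuousOn DW U := by
    have h := hWj.continuousOn_fderiv_of_isOpen hUo le_rfl
    exact (ContinuousLinearMap.apply ℝ ℝ ((1:ℝ), (0:E2))).continuous.comp_continuousOn h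
  have hWd : ∀ (θ : ℝ) (x : E2), (θ, x) ∈ U → HasDerivAt (fun s => W s x) (DW (θ, x)) θ := by
    intro θ x hx
    have hdiff : DifferentiableAt ℝ (fun q : ℝ × E2 => W q.1 q.2) (θ, x) :=
      (hWj.differentiableOn one_ne_zero).differentiableAt (hUo.mem_nhds hx)
    have h1 : HasDerivAt (fun s : ℝ => (s, x)) ((1:ℝ), (0:E2)) θ :=
      (hasDerivAt_id θ).prodMk (hasDerivAt_const θ x)
    exact hdiff.hasFDerivAt.comp_hasDerivAt θ h1
  have hVo : ∀ θ : ℝ, IsOpen {x : E2 | (θ, x) ∈ U} := fun θ =>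
    hUo.preimage (Continuous.prodMk_right θ)
  have hVs : ∀ θ : ℝ, closure D.Ω ⊆ {x : E2 | (θ, x) ∈ U} := fun θ x hx => hmemU θ hx
  have hS1x' : ∀ θ : ℝ, ContDiffOn ℝ 2 (S₁ θ) {x : E2 | (θ, x) ∈ U} := fun θ =>
    (hS₁x θ).mono (fun x hx => hU1 hx)
  have hS2x' : ∀ θ : ℝ, ContDiffOn ℝ 2 (S₂ θ) {x : E2 | (θ, x) ∈ U} := fun θ =>
    (hS₂x θ).mono (fun x hx => hU2 hx)
  have hWx2 : ∀ θ : ℝ, ContDiffOn ℝ 2 (W θ) {x : E2 | (θ, x) ∈ U} := fun θ =>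
    (hS1x' θ).sub (hS2x' θ)
  have haC : ∀ θ : ℝ, ContDiffOn ℝ 1 (fun x => A θ x + ν) {x : E2 | (θ, x) ∈ U} := by
    intro θ
    have hcomp : ContDiffOn ℝ 1 ((fun p : ℝ × E2 => A p.1 p.2) ∘ (fun x : E2 => (θ, x)))
        {x : E2 | (θ, x) ∈ U} :=
      hA.comp ((contDiff_const.prodMk contDiff_id).contDiffOn) (fun x hx => hUA' hx)
    exact hcomp.add contDiffOn_const
  have hgradW : ∀ θ : ℝ, ContDiffOn ℝ 1 (fun x => gradient (W θ) x) {x : E2 | (θ, x) ∈ U} :=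
    fun θ => contDiffOn_gradient (hVo θ) (hWx2 θ)
  have hdiffat1 : ∀ (θ : ℝ) (x : E2), x ∈ {x : E2 | (θ, x) ∈ U} → DifferentiableAt ℝ (S₁ θ) x :=
    fun θ x hx => ((hS1x' θ).differentiableOn two_ne_zero).differentiableAt ((hVo θ).mem_nhds hx)
  have hdiffat2 : ∀ (θ : ℝ) (x : E2), x ∈ {x : E2 | (θ, x) ∈ U} → DifferentiableAt ℝ (S₂ θ) x :=
    fun θ x hx => ((hS2x' θ).differentiableOn two_ne_zero).differentiableAt ((hVo θ).mem_nhds hx)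
  have hgsub : ∀ (θ : ℝ) (x : E2), x ∈ {x : E2 | (θ, x) ∈ U} →
      gradient (W θ) x = gradient (S₁ θ) x - gradient (S₂ θ) x :=
    fun θ x hx => gradient_sub' (hdiffat1 θ x hx) (hdiffat2 θ x hx)
  have hbcW : ∀ θ : ℝ, ∀ x ∈ frontier D.Ω, ⟪gradient (W θ) x, nml D x⟫ = - W θ x := by
    intro θ x hx
    have hxV : x ∈ {x : E2 | (θ, x) ∈ U} := hVs θ (frontier_subset_closure hx)
    rw [hgsub θ x hxV, inner_sub_left]
    have e1 := hbc1 θ x hx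
    have e2 := hbc2 θ x hx
    simp only [hWdef]
    linarith
  have hMeasΩ : MeasurableSet D.Ω := D.isOpen.measurableSet
  -- KEY energy inequality, for each θ
  have key : ∀ θ : ℝ,
      μ * (∫ x in D.Ω, (W θ x)^2) + (∫ x in D.Ω, W θ x * DW (θ, x)) ≤ 0 := by
    intro θ
    have hc : 0 < 1 / ε ^ i := by positivity
    set a : E2 → ℝ := fun x => A θ x + ν with hadef
    set G : E2 → E2 := fun x => a x • gradient (W θ) x with hGdef
    set F : E2 → E2 := fun x => W θ x • G x with hFdef
    have hΩV : D.Ω ⊆ {x : E2 | (θ, x) ∈ U} := fun x hx => hVs θ (subset_closure hx)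
    have hGC : ContDiffOn ℝ 1 G {x : E2 | (θ, x) ∈ U} := (haC θ).smul (hgradW θ)
    have hFC : ContDiffOn ℝ 1 F {x : E2 | (θ, x) ∈ U} :=
      ((hWx2 θ).of_le one_le_two).smul hGC
    have hWtd : ∀ x ∈ {x : E2 | (θ, x) ∈ U}, DifferentiableAt ℝ (W θ) x := fun x hx =>
      ((hWx2 θ).differentiableOn two_ne_zero).differentiableAt ((hVo θ).mem_nhds hx)
    have hGd : ∀ x ∈ {x : E2 | (θ, x) ∈ U}, DifferentiableAt ℝ G x := fun x hx =>
      (hGC.differentiableOn one_ne_zero).differentiableAt ((hVo θ).mem_nhds hx)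
    have hdivF := hdiv F ⟨{x : E2 | (θ, x) ∈ U}, hVo θ, hVs θ, hFC⟩
    have hbpt : ∀ x ∈ frontier D.Ω, ⟪F x, nml D x⟫ ≤ 0 := by
      intro x hx
      have h0 : ⟪F x, nml D x⟫ = W θ x * (a x * ⟪gradient (W θ) x, nml D x⟫) := by
        simp only [hFdef, hGdef, real_inner_smul_left]
      rw [h0, hbcW θ x hx]
      have hA0 : 0 ≤ a x := by simp only [hadef]; linarith [hApos θ x]
      have h1 : W θ x * (a x * - W θ x) = -(a x * (W θ x)^2) := by ring
      rw [h1]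
      have := mul_nonneg hA0 (sq_nonneg (W θ x))
      linarith
    have hbdry : (∫ x in frontier D.Ω, ⟪F x, nml D x⟫ ∂μH[1]) ≤ 0 := by
      apply integral_nonpos_of_ae
      exact ae_restrict_of_forall_mem isClosed_frontier.measurableSet hbpt
    have hpt : ∀ x ∈ D.Ω, vdiv F x = a x * ‖gradient (W θ) x‖^2 + W θ x * vdiv G x := by
      intro x hx
      have h := vdiv_smul (hWtd x (hΩV hx)) (hGd x (hΩV hx))
      have h2 : ⟪gradient (W θ) x, G x⟫ = a x * ‖gradient (W θ) x‖^2 := by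
        simp only [hGdef, real_inner_smul_right, real_inner_self_eq_norm_sq]
      rw [h2] at h
      rw [hFdef]
      exact h
    have hpde : ∀ x ∈ D.Ω, μ * W θ x + DW (θ, x) = (1 / ε ^ i) * vdiv G x := by
      intro x hx
      have hxV : x ∈ {x : E2 | (θ, x) ∈ U} := hΩV hx
      have e1 := hpde1 θ x hx
      have e2 := hpde2 θ x hx
      have hd1 : DifferentiableAt ℝ (fun s : ℝ => S₁ s x) θ := by
        have hj : DifferentiableAt ℝ (fun q : ℝ × E2 => S₁ q.1 q.2) (θ, x) :=
          (hS₁j.differentiableOn one_ne_zero).differentiableAt (hU₁o.mem_nhds (hU1 hxV))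
        exact hj.comp θ (((differentiableAt_id).prodMk (differentiableAt_const x) :
          DifferentiableAt ℝ (fun s : ℝ => (s, x)) θ))
      have hd2 : DifferentiableAt ℝ (fun s : ℝ => S₂ s x) θ := by
        have hj : DifferentiableAt ℝ (fun q : ℝ × E2 => S₂ q.1 q.2) (θ, x) :=
          (hS₂j.differentiableOn one_ne_zero).differentiableAt (hU₂o.mem_nhds (hU2 hxV))
        exact hj.comp θ (((differentiableAt_id).prodMk (differentiableAt_const x) :
          DifferentiableAt ℝ (fun s : ℝ => (s, x)) θ))
      have hder : deriv (fun s => S₁ s x) θ - deriv (fun s => S₂ s x) θ = DW (θ, x) := by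
        have h3 : HasDerivAt (fun s => W s x)
            (deriv (fun s => S₁ s x) θ - deriv (fun s => S₂ s x) θ) θ :=
          hd1.hasDerivAt.sub hd2.hasDerivAt
        exact h3.unique (hWd θ x hxV)
      have hgr1 : ContDiffOn ℝ 1 (fun y => gradient (S₁ θ) y) {x : E2 | (θ, x) ∈ U} :=
        contDiffOn_gradient (hVo θ) (hS1x' θ)
      have hgr2 : ContDiffOn ℝ 1 (fun y => gradient (S₂ θ) y) {x : E2 | (θ, x) ∈ U} :=
        contDiffOn_gradient (hVo θ) (hS2x' θ)
      have hF1d : DifferentiableAt ℝ (fun y => (A θ y + ν) • gradient (S₁ θ) y) x :=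
        (((haC θ).smul hgr1).differentiableOn one_ne_zero).differentiableAt ((hVo θ).mem_nhds hxV)
      have hF2d : DifferentiableAt ℝ (fun y => (A θ y + ν) • gradient (S₂ θ) y) x :=
        (((haC θ).smul hgr2).differentiableOn one_ne_zero).differentiableAt ((hVo θ).mem_nhds hxV)
      have hveq : vdiv (fun y => (A θ y + ν) • gradient (S₁ θ) y) x
          - vdiv (fun y => (A θ y + ν) • gradient (S₂ θ) y) x = vdiv G x := by
        rw [← vdiv_sub hF1d hF2d]
        apply vdiv_congr
        filter_upwards [(hVo θ).mem_nhds hxV] with y hy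
        simp only [hGdef, hadef, hgsub θ y hy, smul_sub]
      have hWx : W θ x = S₁ θ x - S₂ θ x := rfl
      rw [← hder, ← hveq, hWx]
      linear_combination e1 - e2
    have hcWt : ContinuousOn (W θ) {x : E2 | (θ, x) ∈ U} := (hWx2 θ).continuousOn
    have hI1 : IntegrableOn (fun x => a x * ‖gradient (W θ) x‖^2) D.Ω volume :=
      integrableOn_of_contOn hKc
        (((haC θ).continuousOn).mul (((hgradW θ).continuousOn.norm).pow 2)) (hVs θ)
    have hI2 : IntegrableOn (fun x => W θ x * vdiv G x) D.Ω volume :=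
      integrableOn_of_contOn hKc (hcWt.mul (continuousOn_vdiv (hVo θ) hGC)) (hVs θ)
    have hI3 : IntegrableOn (fun x => (W θ x)^2) D.Ω volume :=
      integrableOn_of_contOn hKc (hcWt.pow 2) (hVs θ)
    have hI4 : IntegrableOn (fun x => W θ x * DW (θ, x)) D.Ω volume := by
      refine integrableOn_of_contOn hKc (hcWt.mul ?_) (hVs θ)
      exact hDWc.comp (Continuous.prodMk_right θ).continuousOn (fun x hx => hx)
    have hsplit : (∫ x in D.Ω, vdiv F x)
        = (∫ x in D.Ω, a x * ‖gradient (W θ) x‖^2) + ∫ x in D.Ω, W θ x * vdiv G x := by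
      rw [setIntegral_congr_fun hMeasΩ (fun x hx => hpt x hx)]
      exact integral_add hI1 hI2
    have hpos1 : 0 ≤ ∫ x in D.Ω, a x * ‖gradient (W θ) x‖^2 :=
      setIntegral_nonneg hMeasΩ (fun x _ =>
        mul_nonneg (by simp only [hadef]; linarith [hApos θ x]) (sq_nonneg _))
    have hWG : (∫ x in D.Ω, W θ x * vdiv G x) ≤ 0 := by
      have h5 : (∫ x in D.Ω, W θ x * vdiv G x)
          = (∫ x in frontier D.Ω, ⟪F x, nml D x⟫ ∂μH[1])
            - ∫ x in D.Ω, a x * ‖gradient (W θ) x‖^2 := by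
        rw [← hdivF, hsplit]; ring
      rw [h5]; linarith
    have hptf : ∀ x ∈ D.Ω,
        μ * (W θ x)^2 + W θ x * DW (θ, x) = (1 / ε ^ i) * (W θ x * vdiv G x) := by
      intro x hx
      have h6 := hpde x hx
      linear_combination (W θ x) * h6
    have e7 : (∫ x in D.Ω, (μ * (W θ x)^2 + W θ x * DW (θ, x)))
        = μ * (∫ x in D.Ω, (W θ x)^2) + ∫ x in D.Ω, W θ x * DW (θ, x) := by
      rw [integral_add (hI3.const_mul μ) hI4, integral_const_mul]
    have e8 : (∫ x in D.Ω, (μ * (W θ x)^2 + W θ x * DW (θ, x)))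
        = (1 / ε ^ i) * ∫ x in D.Ω, W θ x * vdiv G x := by
      rw [setIntegral_congr_fun hMeasΩ (fun x hx => hptf x hx), integral_const_mul]
    rw [← e7, e8]
    exact mul_nonpos_of_nonneg_of_nonpos hc.le hWG
  -- Fubini over a period
  set P : Measure (ℝ × E2) := (volume.restrict (Icc (0:ℝ) 1)).prod (volume.restrict D.Ω)
    with hPdef
  have hIcomp : IsCompact ((Icc (0:ℝ) 1) ×ˢ closure D.Ω) := isCompact_Icc.prod hKc
  have hIsub : (Icc (0:ℝ) 1) ×ˢ closure D.Ω ⊆ U := fun p hp => hmemU p.1 hp.2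
  have hintegr : ∀ {f : ℝ × E2 → ℝ}, ContinuousOn f U → Integrable f P := by
    intro f hf
    rw [hPdef, Measure.prod_restrict]
    refine IntegrableOn.mono_set ?_ (prod_mono subset_rfl subset_closure)
    exact (hf.mono hIsub).integrableOn_compact hIcomp
  have hKint : Integrable (fun p : ℝ × E2 => (W p.1 p.2)^2) P := hintegr (hWc.pow 2)
  have hHint : Integrable (fun p : ℝ × E2 => W p.1 p.2 * DW p) P := hintegr (hWc.mul hDWc)
  have hinner : ∀ x ∈ closure D.Ω, (∫ t in Icc (0:ℝ) 1, W t x * DW (t, x)) = 0 := by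
    intro x hx
    have hmk : Continuous (fun t : ℝ => ((t, x) : ℝ × E2)) := continuous_id.prodMk continuous_const
    have hcW : ContinuousOn (fun t : ℝ => W t x * DW (t, x)) (uIcc (0:ℝ) 1) := by
      refine ContinuousOn.mul ?_ ?_
      · exact hWc.comp hmk.continuousOn (fun t _ => hmemU t hx)
      · exact hDWc.comp hmk.continuousOn (fun t _ => hmemU t hx)
    have hFTC : ∀ t ∈ uIcc (0:ℝ) 1,
        HasDerivAt (fun s => (W s x)^2 / 2) (W t x * DW (t, x)) t := by
      intro t _
      have h := hWd t x (hmemU t hx)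
      have h2 := (h.mul h).div_const 2
      have h3 : (DW (t, x) * W t x + W t x * DW (t, x)) / 2 = W t x * DW (t, x) := by ring
      rw [h3] at h2
      simpa only [sq, Pi.mul_apply] using h2
    have hII : IntervalIntegrable (fun t => W t x * DW (t, x)) volume 0 1 :=
      hcW.intervalIntegrable
    rw [MeasureTheory.integral_Icc_eq_integral_Ioc,
      ← intervalIntegral.integral_of_le (zero_le_one)]
    rw [intervalIntegral.integral_eq_sub_of_hasDerivAt hFTC hII]
    have hper : W 1 x = W 0 x := by
      have h9 : W (0 + 1) x = W 0 x := by
        simp only [hWdef]; rw [hper1, hper2]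
      simpa using h9
    rw [hper]; ring
  rw [hPdef] at hKint hHint
  have hH0 : (∫ p : ℝ × E2, W p.1 p.2 * DW p
      ∂((volume.restrict (Icc (0:ℝ) 1)).prod (volume.restrict D.Ω))) = 0 := by
    rw [MeasureTheory.integral_prod_symm _ hHint]
    have h10 : ∀ x ∈ D.Ω,
        (∫ t in Icc (0:ℝ) 1, W t x * DW (t, x)) = (0 : ℝ) :=
      fun x hx => hinner x (subset_closure hx)
    rw [setIntegral_congr_fun hMeasΩ (fun x hx => h10 x hx)]
    simp
  have hKprod : (∫ p : ℝ × E2, (W p.1 p.2)^2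
      ∂((volume.restrict (Icc (0:ℝ) 1)).prod (volume.restrict D.Ω)))
      = ∫ t in Icc (0:ℝ) 1, (∫ x in D.Ω, (W t x)^2) :=
    MeasureTheory.integral_prod _ hKint
  have hHprod : (∫ p : ℝ × E2, W p.1 p.2 * DW p
      ∂((volume.restrict (Icc (0:ℝ) 1)).prod (volume.restrict D.Ω)))
      = ∫ t in Icc (0:ℝ) 1, (∫ x in D.Ω, W t x * DW (t, x)) :=
    MeasureTheory.integral_prod _ hHint
  have hKmarg : Integrable (fun t => ∫ x in D.Ω, (W t x)^2)
      (volume.restrict (Icc (0:ℝ) 1)) := hKint.integral_prod_left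
  have hHmarg : Integrable (fun t => ∫ x in D.Ω, W t x * DW (t, x))
      (volume.restrict (Icc (0:ℝ) 1)) := hHint.integral_prod_left
  have hg0 : (∫ t in Icc (0:ℝ) 1,
      (μ * (∫ x in D.Ω, (W t x)^2) + ∫ x in D.Ω, W t x * DW (t, x))) ≤ 0 :=
    integral_nonpos (fun t => key t)
  have hsum : (∫ t in Icc (0:ℝ) 1,
      (μ * (∫ x in D.Ω, (W t x)^2) + ∫ x in D.Ω, W t x * DW (t, x)))
      = μ * (∫ t in Icc (0:ℝ) 1, (∫ x in D.Ω, (W t x)^2))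
        + ∫ t in Icc (0:ℝ) 1, (∫ x in D.Ω, W t x * DW (t, x)) := by
    rw [integral_add (hKmarg.const_mul μ) hHmarg, integral_const_mul]
  have hKz : (∫ p : ℝ × E2, (W p.1 p.2)^2
      ∂((volume.restrict (Icc (0:ℝ) 1)).prod (volume.restrict D.Ω))) = 0 := by
    have h1 : 0 ≤ ∫ p : ℝ × E2, (W p.1 p.2)^2
        ∂((volume.restrict (Icc (0:ℝ) 1)).prod (volume.restrict D.Ω)) :=
      integral_nonneg (fun p => sq_nonneg _)
    have h2 : μ * (∫ p : ℝ × E2, (W p.1 p.2)^2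
        ∂((volume.restrict (Icc (0:ℝ) 1)).prod (volume.restrict D.Ω))) ≤ 0 := by
      rw [hsum] at hg0
      rw [hKprod]
      rw [← hHprod] at hg0
      linarith [hg0, hH0]
    nlinarith
  have hae : ∀ᵐ p : ℝ × E2 ∂((volume.restrict (Icc (0:ℝ) 1)).prod (volume.restrict D.Ω)),
      (W p.1 p.2)^2 = 0 :=
    (integral_eq_zero_iff_of_nonneg (fun p => sq_nonneg _) hKint).mp hKz
  have hae2 := MeasureTheory.Measure.ae_ae_of_ae_prod hae
  have hT : ∀ᵐ t ∂(volume.restrict (Icc (0:ℝ) 1)), ∀ x ∈ D.Ω, W t x = 0 := by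
    filter_upwards [hae2] with t ht
    have hcont : ContinuousOn (fun x => (W t x)^2) D.Ω :=
      (((hWx2 t).continuousOn).mono (fun x hx => hVs t (subset_closure hx))).pow 2
    have hz := eqzero_of_ae_zero D.isOpen hcont subset_rfl ht
    intro x hx
    exact sq_eq_zero_iff.mp (hz x hx)
  have hΩzero : ∀ (t : ℝ), ∀ x ∈ D.Ω, W t x = 0 := by
    intro t x hx
    have hfc : Continuous (fun s => W s x) := by
      rw [continuous_iff_continuousAt]
      intro s
      exact (hWd s x (hmemU s (subset_closure hx))).differentiableAt.continuousAt
    have hT' : ∀ᵐ s ∂(volume.restrict (Icc (0:ℝ) 1)), W s x = 0 :=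
      hT.mono (fun s hs => hs x hx)
    have hIoo : ∀ s ∈ Ioo (0:ℝ) 1, W s x = 0 :=
      eqzero_of_ae_zero isOpen_Ioo hfc.continuousOn Ioo_subset_Icc_self hT'
    have hIcc : ∀ s ∈ Icc (0:ℝ) 1, W s x = 0 := by
      have h11 : Set.EqOn (fun s => W s x) (fun _ => (0:ℝ)) (closure (Ioo (0:ℝ) 1)) :=
        Set.EqOn.closure (fun s hs => hIoo s hs) hfc continuous_const
      rw [closure_Ioo (by norm_num : (0:ℝ) ≠ 1)] at h11
      exact fun s hs => h11 hs
    have hperf : Function.Periodic (fun s => W s x) 1 := by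
      intro s
      simp only [hWdef]
      rw [hper1, hper2]
    have h12 : W (t - (⌊t⌋ : ℝ) * 1) x = W t x := hperf.sub_int_mul_eq ⌊t⌋
    rw [← h12]
    apply hIcc
    constructor
    · rw [mul_one]; linarith [Int.floor_le t]
    · rw [mul_one]; linarith [Int.lt_floor_add_one t]
  have hcontW : ContinuousOn (W θ₀) {x : E2 | (θ₀, x) ∈ U} := (hWx2 θ₀).continuousOn
  have hneB : (nhdsWithin x₀ D.Ω).NeBot := mem_closure_iff_nhdsWithin_neBot.mp hx₀
  have ht1 : Filter.Tendsto (W θ₀) (nhdsWithin x₀ D.Ω) (nhds (W θ₀ x₀)) :=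
    (hcontW.continuousAt ((hVo θ₀).mem_nhds (hVs θ₀ hx₀))).continuousWithinAt
  have ht2 : Filter.Tendsto (W θ₀) (nhdsWithin x₀ D.Ω) (nhds 0) := by
    apply Filter.Tendsto.congr' ?_ tendsto_const_nhds
    filter_upwards [self_mem_nhdsWithin] with y hy
    exact (hΩzero θ₀ y hy).symm
  have hW0 : W θ₀ x₀ = 0 := tendsto_nhds_unique ht1 ht2
  have hfin : S₁ θ₀ x₀ - S₂ θ₀ x₀ = 0 := hW0
  linarith


end
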